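/- Let α, β > 0 with α² ∉ ℚ and β ∉ ℚ. Then A_{α,β} is an open subset of (𝔈, τ). -/

import Mathlib

noncomputable section

open scoped ENNReal

/-- The ambient Hilbert space `ℓ²` of real square-summable sequences. -/
abbrev ellTwo : Type := lp (fun _ : ℕ => ℝ) 2

/-- Erdős space `𝔈`: the additive subgroup of `ℓ²` consisting of the sequences
all of whose coordinates are rational. -/
def Erdos : AddSubgroup ellTwo where
  carrier := {x | ∀ k, ∃ q : ℚ, (x : ℕ → ℝ) k = (q : ℝ)}
  add_mem' := by
    intro a b ha hb k
    obtain ⟨p, hp⟩ := ha k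
    obtain ⟨q, hq⟩ := hb k
    exact ⟨p + q, by rw [lp.coeFn_add]; simp [hp, hq]⟩
  zero_mem' := fun k => ⟨0, by simp⟩
  neg_mem' := by
    intro a ha k
    obtain ⟨p, hp⟩ := ha k
    exact ⟨-p, by rw [lp.coeFn_neg]; simp [hp]⟩

/-- Erdős space as a type (with the subspace topology and norm inherited from `ℓ²`). -/
abbrev ErdosSpace : Type := ↥Erdos

/-- The coordinates of a point of Erdős space (indexed from `0`, so that the
coordinate `x_k` of the paper is `coords x (k-1)`). -/
def coords (x : ErdosSpace) : ℕ → ℝ := ((x : ellTwo) : ℕ → ℝ)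

/-- `mExists x α` says that `m_{x,α}` exists, i.e. some finite initial sum of squares
of coordinates exceeds `α` (here `m` counts how many initial coordinates are taken). -/
def mExists (x : ErdosSpace) (α : ℝ) : Prop :=
  ∃ m : ℕ, α < Real.sqrt (∑ k ∈ Finset.range m, (coords x k) ^ 2)

/-- `mIndex x α` is the least `m` such that `√(∑_{k<m} x_k²) > α` (and `0` if none exists);
this corresponds to `m_{x,α}` of the paper. -/
def mIndex (x : ErdosSpace) (α : ℝ) : ℕ :=
  sInf {m : ℕ | α < Real.sqrt (∑ k ∈ Finset.range m, (coords x k) ^ 2)}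

/-- The set `A_{α,β}`: those `x` for which either `m_{x,α}` exists and every coordinate
beyond the first `m_{x,α}` ones has absolute value `< β`, or `m_{x,α}` does not exist. -/
def A (α β : ℝ) : Set ErdosSpace :=
  {x | (mExists x α ∧ ∀ l, mIndex x α ≤ l → |coords x l| < β) ∨ ¬mExists x α}


def pnorm (x : ErdosSpace) (m : ℕ) : ℝ := Real.sqrt (∑ k ∈ Finset.range m, (coords x k)^2)

lemma coords_sub (x y : ErdosSpace) (k : ℕ) :
    coords (x - y) k = coords x k - coords y k := by
  simp [coords, lp.coeFn_sub]

lemma abs_coords_le (x y : ErdosSpace) (k : ℕ) :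
    |coords x k - coords y k| ≤ ‖x - y‖ := by
  have h := lp.norm_apply_le_norm (by norm_num : (2:ℝ≥0∞) ≠ 0) ((x - y : ErdosSpace) : ellTwo) k
  rw [Real.norm_eq_abs] at h
  rw [← coords_sub]
  exact h

lemma sqrt_sum_le_norm (z : ErdosSpace) (m : ℕ) :
    Real.sqrt (∑ k ∈ Finset.range m, (coords z k)^2) ≤ ‖z‖ := by
  have h := lp.sum_rpow_le_norm_rpow (E := fun _ : ℕ => ℝ) (p := 2) (by norm_num) (z : ellTwo) (Finset.range m)
  have e : ((2 : ℝ≥0∞)).toReal = (2:ℝ) := by norm_num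
  rw [e] at h
  have h2 : ∑ k ∈ Finset.range m, (coords z k)^2 ≤ ‖z‖^2 := by
    calc ∑ k ∈ Finset.range m, (coords z k)^2
        = ∑ k ∈ Finset.range m, ‖((z : ellTwo) : ℕ → ℝ) k‖ ^ (2:ℝ) := by
          refine Finset.sum_congr rfl fun k _ => ?_
          rw [Real.rpow_two, Real.norm_eq_abs, sq_abs]; rfl
      _ ≤ ‖(z : ellTwo)‖ ^ (2:ℝ) := h
      _ = ‖z‖^2 := by rw [Real.rpow_two]; rfl
  calc Real.sqrt (∑ k ∈ Finset.range m, (coords z k)^2)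
      ≤ Real.sqrt (‖z‖^2) := Real.sqrt_le_sqrt h2
    _ = ‖z‖ := Real.sqrt_sq (norm_nonneg z)

lemma sqrt_sum_sq_sub_le (m : ℕ) (a b : ℕ → ℝ) :
    Real.sqrt (∑ k ∈ Finset.range m, (a k)^2)
      ≤ Real.sqrt (∑ k ∈ Finset.range m, (b k)^2)
        + Real.sqrt (∑ k ∈ Finset.range m, (a k - b k)^2) := by
  let u : EuclideanSpace ℝ (Fin m) := WithLp.toLp 2 (fun i => a i)
  let v : EuclideanSpace ℝ (Fin m) := WithLp.toLp 2 (fun i => b i)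
  have hn : ∀ w : EuclideanSpace ℝ (Fin m), ‖w‖ = Real.sqrt (∑ i : Fin m, (w i)^2) := by
    intro w
    rw [EuclideanSpace.norm_eq]
    congr 1
    exact Finset.sum_congr rfl fun i _ => by rw [Real.norm_eq_abs, sq_abs]
  have h : ‖u‖ ≤ ‖v‖ + ‖u - v‖ := by
    have := norm_add_le v (u - v); simpa using this
  rw [hn, hn, hn] at h
  have e1 : ∑ i : Fin m, (u i)^2 = ∑ k ∈ Finset.range m, (a k)^2 :=
    Fin.sum_univ_eq_sum_range (fun k => (a k)^2) m
  have e2 : ∑ i : Fin m, (v i)^2 = ∑ k ∈ Finset.range m, (b k)^2 :=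
    Fin.sum_univ_eq_sum_range (fun k => (b k)^2) m
  have e3 : ∑ i : Fin m, ((u - v) i)^2 = ∑ k ∈ Finset.range m, (a k - b k)^2 := by
    have : ∀ i : Fin m, (u - v) i = a i - b i := fun i => rfl
    simp only [this]
    exact Fin.sum_univ_eq_sum_range (fun k => (a k - b k)^2) m
  rw [e1, e2, e3] at h
  exact h

lemma pnorm_triangle (x y : ErdosSpace) (m : ℕ) : pnorm x m ≤ pnorm y m + ‖x - y‖ := by
  have h1 := sqrt_sum_sq_sub_le m (coords x) (coords y)
  have h2 : Real.sqrt (∑ k ∈ Finset.range m, (coords x k - coords y k)^2) ≤ ‖x - y‖ := by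
    have heq : Real.sqrt (∑ k ∈ Finset.range m, (coords x k - coords y k)^2)
        = Real.sqrt (∑ k ∈ Finset.range m, (coords (x - y) k)^2) := by
      congr 1
    rw [heq]
    exact sqrt_sum_le_norm (x - y) m
  unfold pnorm
  linarith

lemma sum_sq_rat (x : ErdosSpace) (m : ℕ) :
    ∃ q : ℚ, ∑ k ∈ Finset.range m, (coords x k)^2 = (q : ℝ) := by
  choose f hf using x.2
  refine ⟨∑ k ∈ Finset.range m, (f k)^2, ?_⟩
  push_cast
  exact Finset.sum_congr rfl fun k _ => by rw [show coords x k = (f k : ℝ) from hf k]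

lemma pnorm_lt {α : ℝ} (hα : 0 < α) (hirr : Irrational (α^2)) (x : ErdosSpace) (j : ℕ)
    (h : ¬ α < pnorm x j) : pnorm x j < α := by
  have hS0 : 0 ≤ ∑ k ∈ Finset.range j, (coords x k)^2 :=
    Finset.sum_nonneg fun k _ => sq_nonneg _
  push_neg at h
  rcases lt_or_eq_of_le h with h' | h'
  · exact h'
  · exfalso
    obtain ⟨q, hq⟩ := sum_sq_rat x j
    refine hirr ⟨q, ?_⟩
    rw [← h']
    rw [show pnorm x j ^ 2 = ∑ k ∈ Finset.range j, (coords x k)^2 from Real.sq_sqrt hS0]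
    exact hq.symm

lemma tail_small (x : ErdosSpace) {c : ℝ} (hc : 0 < c) :
    ∃ N : ℕ, ∀ l, N ≤ l → |coords x l| < c := by
  have hmem : Memℓp (((x : ellTwo) : ℕ → ℝ)) 2 := (x : ellTwo).2
  have hsum : Summable fun i => ‖((x : ellTwo) : ℕ → ℝ) i‖ ^ ((2:ℝ≥0∞)).toReal :=
    hmem.summable (by norm_num)
  have h0 := hsum.tendsto_atTop_zero
  have hev : ∀ᶠ l in Filter.atTop, ‖((x : ellTwo) : ℕ → ℝ) l‖ ^ ((2:ℝ≥0∞)).toReal < c^2 :=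
    h0.eventually_lt_const (by positivity)
  obtain ⟨N, hN⟩ := hev.exists_forall_of_atTop
  refine ⟨N, fun l hl => ?_⟩
  have h1 := hN l hl
  have e : ((2 : ℝ≥0∞)).toReal = (2:ℝ) := by norm_num
  rw [e, Real.rpow_two, Real.norm_eq_abs] at h1
  exact lt_of_pow_lt_pow_left₀ 2 hc.le h1

/-- Claim 3: for `α, β > 0` with `α²` and `β` irrational, `A_{α,β}` is open in Erdős space. -/
theorem A_isOpen (α β : ℝ) (hα : 0 < α) (hβ : 0 < β)
    (hα2irr : Irrational (α ^ 2)) (hβirr : Irrational β) :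
    IsOpen (A α β) := by
  rw [Metric.isOpen_iff]
  rintro x hx
  rcases hx with ⟨hex, htail⟩ | hnex
  · -- Case 1 : m_{x,α} exists
    have hm : α < pnorm x (mIndex x α) := Nat.sInf_mem hex
    set m := mIndex x α with hm_def
    have hm0 : m ≠ 0 := by
      intro h
      rw [h] at hm
      simp [pnorm] at hm
      linarith
    have hjlt : ∀ j, j < m → pnorm x j < α := fun j hj =>
      pnorm_lt hα hα2irr x j (Nat.notMem_of_lt_sInf hj)
    obtain ⟨N0, hN0⟩ := tail_small x (half_pos hβ)
    set N := max N0 (m + 1) with hN_def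
    have hmN : m < N := lt_of_lt_of_le (Nat.lt_succ_self m) (le_max_right _ _)
    have hN0le : N0 ≤ N := le_max_left _ _
    have hIco : (Finset.Ico m N).Nonempty := by rw [Finset.nonempty_Ico]; exact hmN
    have hrange : (Finset.range m).Nonempty := Finset.nonempty_range_iff.mpr hm0
    set ε1 := pnorm x m - α with hε1_def
    set ε2 := (Finset.range m).inf' hrange (fun j => α - pnorm x j) with hε2_def
    set ε3 := (Finset.Ico m N).inf' hIco (fun l => β - |coords x l|) with hε3_def
    set ε := min (min ε1 ε2) (min ε3 (β/2)) with hε_def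
    have hε1 : 0 < ε1 := sub_pos.mpr hm
    have hε2 : 0 < ε2 := by
      rw [hε2_def, Finset.lt_inf'_iff]
      intro j hj
      rw [Finset.mem_range] at hj
      exact sub_pos.mpr (hjlt j hj)
    have hε3 : 0 < ε3 := by
      rw [hε3_def, Finset.lt_inf'_iff]
      intro l hl
      rw [Finset.mem_Ico] at hl
      exact sub_pos.mpr (htail l hl.1)
    refine ⟨ε, lt_min (lt_min hε1 hε2) (lt_min hε3 (half_pos hβ)), ?_⟩
    intro y hy
    rw [Metric.mem_ball, dist_eq_norm] at hy
    have hεε1 : ε ≤ ε1 := le_trans (min_le_left _ _) (min_le_left _ _)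
    have hεε2 : ε ≤ ε2 := le_trans (min_le_left _ _) (min_le_right _ _)
    have hεε3 : ε ≤ ε3 := le_trans (min_le_right _ _) (min_le_left _ _)
    have hεβ : ε ≤ β/2 := le_trans (min_le_right _ _) (min_le_right _ _)
    have hym : α < pnorm y m := by
      have h1 : pnorm x m ≤ pnorm y m + ‖x - y‖ := pnorm_triangle x y m
      have h2 : ‖x - y‖ = ‖y - x‖ := norm_sub_rev x y
      linarith
    have hey : mExists y α := ⟨m, hym⟩
    have hmy : m ≤ mIndex y α := by
      by_contra hcon
      push_neg at hcon
      have hmem : α < pnorm y (mIndex y α) := Nat.sInf_mem hey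
      have h1 : pnorm y (mIndex y α) ≤ pnorm x (mIndex y α) + ‖y - x‖ :=
        pnorm_triangle y x (mIndex y α)
      have h3 : ε2 ≤ α - pnorm x (mIndex y α) := by
        rw [hε2_def]
        exact Finset.inf'_le _ (Finset.mem_range.mpr hcon)
      linarith
    left
    refine ⟨hey, fun l hl => ?_⟩
    have hlm : m ≤ l := le_trans hmy hl
    have h1 : |coords y l| - |coords x l| ≤ |coords y l - coords x l| :=
      abs_sub_abs_le_abs_sub _ _
    have h2 : |coords y l - coords x l| ≤ ‖y - x‖ := abs_coords_le y x l
    rcases lt_or_ge l N with hlN | hlN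
    · have h3 : ε3 ≤ β - |coords x l| := by
        rw [hε3_def]
        exact Finset.inf'_le _ (Finset.mem_Ico.mpr ⟨hlm, hlN⟩)
      linarith
    · have h3 := hN0 l (le_trans hN0le hlN)
      linarith
  · -- Case 2 : m_{x,α} does not exist
    obtain ⟨N0, hN0⟩ := tail_small x (half_pos hβ)
    have hjlt : ∀ j, pnorm x j < α := fun j =>
      pnorm_lt hα hα2irr x j (fun h => hnex ⟨j, h⟩)
    have hrange : (Finset.range (N0+1)).Nonempty := Finset.nonempty_range_iff.mpr (Nat.succ_ne_zero _)
    set ε2 := (Finset.range (N0+1)).inf' hrange (fun j => α - pnorm x j) with hε2_def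
    set ε := min ε2 (β/2) with hε_def
    have hε2 : 0 < ε2 := by
      rw [hε2_def, Finset.lt_inf'_iff]
      intro j _
      exact sub_pos.mpr (hjlt j)
    refine ⟨ε, lt_min hε2 (half_pos hβ), ?_⟩
    intro y hy
    rw [Metric.mem_ball, dist_eq_norm] at hy
    have hεε2 : ε ≤ ε2 := min_le_left _ _
    have hεβ : ε ≤ β/2 := min_le_right _ _
    by_cases hey : mExists y α
    · left
      refine ⟨hey, ?_⟩
      have hmy : N0 + 1 ≤ mIndex y α := by
        by_contra hcon
        push_neg at hcon
        have hmem : α < pnorm y (mIndex y α) := Nat.sInf_mem hey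
        have h1 : pnorm y (mIndex y α) ≤ pnorm x (mIndex y α) + ‖y - x‖ :=
          pnorm_triangle y x (mIndex y α)
        have h3 : ε2 ≤ α - pnorm x (mIndex y α) := by
          rw [hε2_def]
          exact Finset.inf'_le _ (Finset.mem_range.mpr hcon)
        linarith
      intro l hl
      have hlN : N0 ≤ l := le_trans (Nat.le_of_succ_le hmy) hl
      have h1 := hN0 l hlN
      have h2 : |coords y l| - |coords x l| ≤ |coords y l - coords x l| :=
        abs_sub_abs_le_abs_sub _ _
      have h3 : |coords y l - coords x l| ≤ ‖y - x‖ := abs_coords_le y x l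
      linarith
    · right
      exact hey
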